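/- Let R be a complete non-archimedean ring over Q_p with ring of integral elements R°. Let f_1,…,f_r, g ∈ R°⟨X_1,…,X_d⟩ be power series with constant terms a_{0,i} = f_i(0) and b_0 = g(0). Suppose b_0 ∈ R^× and |a_{0,i}(x)| ≤ |b_0(x)| for all points x. Then there exists ε > 0 such that for all x and all points y of the closed ball of radius ε, one has |f_i(y)| ≤ |g(y)| and g(y) ≠ 0. -/
import Mathlib


/-!
STATEMENT 0 (Lemma `l:open-nbhd-of-origin-contains-ball`):
Let R be a complete non-archimedean ring over Q_p (e.g. the ring of functions on an affinoid
base S) with ring of integral elements R°.  Let f₁,…,f_r, g ∈ R°⟨X₁,…,X_d⟩ with constant terms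
a_{0,i} = f_i(0), b₀ = g(0).  If b₀ ∈ R^× and |a_{0,i}(x)| ≤ |b₀(x)| for all points x, then
there is ε > 0 such that for all points x and all y in the closed ball of radius ε one has
|f_i(y)| ≤ |g(y)| and g(y) ≠ 0.

Formalization: `K` is a complete non-archimedean normed field; points `x` of the base range
over a type ι, and an element of R = O(S) is a function ι → K; a restricted power series in
R°⟨X₁,…,X_d⟩ is given by its coefficient family c : (Fin d →₀ ℕ) → (ι → K), with all values of
norm ≤ 1 (integrality) and tending to 0 (restrictedness); evaluation at a point x and at
y ∈ K^d is the sum `rpsEval`.  The invertibility b₀ ∈ R^× is expressed by a uniform lower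
bound δ ≤ ‖b₀(x)‖ (which characterizes units of an affinoid algebra in sup-norm terms),
together with pointwise nonvanishing.
-/

open Filter

/-- Evaluation of a restricted power series (given by its coefficients) at a point of the
polydisc. -/
noncomputable def rpsEval {K : Type*} [NormedField K] {d : ℕ}
    (c : (Fin d →₀ ℕ) → K) (y : Fin d → K) : K :=
  ∑' n : (Fin d →₀ ℕ), c n * ∏ j : Fin d, y j ^ n j

section aux
variable {K : Type*} [NontriviallyNormedField K] [IsUltrametricDist K] [CompleteSpace K] {d : ℕ}
set_option linter.unusedSectionVars false

lemma rps_term_norm_le {c : (Fin d →₀ ℕ) → K} (hint : ∀ n, ‖c n‖ ≤ 1)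
    {ε : ℝ} (hε0 : 0 < ε) (hε1 : ε ≤ 1) {y : Fin d → K} (hy : ∀ j, ‖y j‖ ≤ ε)
    {n : Fin d →₀ ℕ} (hn : n ≠ 0) :
    ‖c n * ∏ j : Fin d, y j ^ n j‖ ≤ ε := by
  obtain ⟨j, hj⟩ : ∃ j, n j ≠ 0 := by
    by_contra h
    push_neg at h
    exact hn (Finsupp.ext fun j => h j)
  have hy1 : ∀ j, ‖y j‖ ≤ 1 := fun j => (hy j).trans hε1
  have hprod : ‖∏ j : Fin d, y j ^ n j‖ ≤ ε := by
    rw [norm_prod]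
    calc ∏ j : Fin d, ‖y j ^ n j‖
        = ‖y j ^ n j‖ * ∏ k ∈ Finset.univ.erase j, ‖y k ^ n k‖ := by
          rw [← Finset.prod_erase_mul _ _ (Finset.mem_univ j), mul_comm]
      _ ≤ ε * 1 := by
          apply mul_le_mul
          · rw [norm_pow]
            calc ‖y j‖ ^ n j ≤ ‖y j‖ := pow_le_of_le_one (norm_nonneg _) (hy1 j) hj
              _ ≤ ε := hy j
          · apply Finset.prod_le_one (fun k _ => norm_nonneg _)
            intro k _
            rw [norm_pow]
            exact pow_le_one₀ (norm_nonneg _) (hy1 k)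
          · exact Finset.prod_nonneg fun k _ => norm_nonneg _
          · exact hε0.le
      _ = ε := mul_one ε
  calc ‖c n * ∏ j : Fin d, y j ^ n j‖ = ‖c n‖ * ‖∏ j : Fin d, y j ^ n j‖ := norm_mul _ _
    _ ≤ 1 * ε := mul_le_mul (hint n) hprod (norm_nonneg _) zero_le_one
    _ = ε := one_mul ε

lemma rps_tail_norm_le {c : (Fin d →₀ ℕ) → K} (hint : ∀ n, ‖c n‖ ≤ 1)
    (hres : Tendsto c cofinite (nhds 0))
    {ε : ℝ} (hε0 : 0 < ε) (hε1 : ε ≤ 1) {y : Fin d → K} (hy : ∀ j, ‖y j‖ ≤ ε) :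
    ‖rpsEval c y - c 0‖ ≤ ε := by
  have hterm : Tendsto (fun n : Fin d →₀ ℕ => c n * ∏ j : Fin d, y j ^ n j) cofinite (nhds 0) := by
    apply squeeze_zero_norm (a := fun n => ‖c n‖)
    · intro n
      rw [norm_mul]
      calc ‖c n‖ * ‖∏ j : Fin d, y j ^ n j‖ ≤ ‖c n‖ * 1 := by
            apply mul_le_mul_of_nonneg_left _ (norm_nonneg _)
            rw [norm_prod]
            apply Finset.prod_le_one (fun k _ => norm_nonneg _)
            intro k _
            rw [norm_pow]
            exact pow_le_one₀ (norm_nonneg _) ((hy k).trans hε1)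
        _ = ‖c n‖ := mul_one _
    · simpa using hres.norm
  have hsum : Summable (fun n : Fin d →₀ ℕ => c n * ∏ j : Fin d, y j ^ n j) :=
    NonarchimedeanAddGroup.summable_of_tendsto_cofinite_zero hterm
  have h0 : c 0 * ∏ j : Fin d, y j ^ (0 : Fin d →₀ ℕ) j = c 0 := by simp
  rw [rpsEval, Summable.tsum_eq_add_tsum_ite hsum 0, h0, add_sub_cancel_left]
  apply IsUltrametricDist.norm_tsum_le_of_forall_le_of_nonneg hε0.le
  intro n
  by_cases hn : n = 0
  · simp [hn, hε0.le]
  · simp only [hn, if_neg hn]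
    exact rps_term_norm_le hint hε0 hε1 hy hn

end aux

theorem rational_subset_contains_small_ball
    {K : Type*} [NontriviallyNormedField K] [IsUltrametricDist K] [CompleteSpace K]
    {ι : Type*} {d r : ℕ}
    (f : Fin r → (Fin d →₀ ℕ) → ι → K) (g : (Fin d →₀ ℕ) → ι → K)
    (hf_int : ∀ i n x, ‖f i n x‖ ≤ 1) (hg_int : ∀ n x, ‖g n x‖ ≤ 1)
    (hf_restricted : ∀ i x, Tendsto (fun n => f i n x) cofinite (nhds 0))
    (hg_restricted : ∀ x, Tendsto (fun n => g n x) cofinite (nhds 0))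
    (hb0_unit : (∀ x, g 0 x ≠ 0) ∧ ∃ δ : ℝ, 0 < δ ∧ ∀ x, δ ≤ ‖g 0 x‖)
    (ha0 : ∀ i x, ‖f i 0 x‖ ≤ ‖g 0 x‖) :
    ∃ ε : ℝ, 0 < ε ∧ ∀ (x : ι) (y : Fin d → K), (∀ j, ‖y j‖ ≤ ε) →
      (∀ i, ‖rpsEval (fun n => f i n x) y‖ ≤ ‖rpsEval (fun n => g n x) y‖) ∧
        rpsEval (fun n => g n x) y ≠ 0 := by
  obtain ⟨hg0, δ, hδ, hδle⟩ := hb0_unit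
  refine ⟨min (δ / 2) 1, lt_min (by linarith) one_pos, fun x y hy => ?_⟩
  set ε := min (δ / 2) 1 with hε
  have hε0 : 0 < ε := lt_min (by linarith) one_pos
  have hε1 : ε ≤ 1 := min_le_right _ _
  have hεδ : ε < δ := lt_of_le_of_lt (min_le_left _ _) (by linarith)
  -- tail bound for g
  have hgt : ‖rpsEval (fun n => g n x) y - g 0 x‖ ≤ ε :=
    rps_tail_norm_le (fun n => hg_int n x) (hg_restricted x) hε0 hε1 hy
  have hεg : ε < ‖g 0 x‖ := hεδ.trans_le (hδle x)
  have hgeq : ‖rpsEval (fun n => g n x) y‖ = ‖g 0 x‖ := by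
    have : rpsEval (fun n => g n x) y = g 0 x + (rpsEval (fun n => g n x) y - g 0 x) := by ring
    rw [this, IsUltrametricDist.norm_add_eq_max_of_norm_ne_norm, max_eq_left]
    · exact (hgt.trans hεg.le)
    · exact ne_of_gt (lt_of_le_of_lt hgt hεg)
  constructor
  · intro i
    have hft : ‖rpsEval (fun n => f i n x) y - f i 0 x‖ ≤ ε :=
      rps_tail_norm_le (fun n => hf_int i n x) (hf_restricted i x) hε0 hε1 hy
    have : rpsEval (fun n => f i n x) y
        = f i 0 x + (rpsEval (fun n => f i n x) y - f i 0 x) := by ring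
    rw [hgeq, this]
    calc ‖f i 0 x + (rpsEval (fun n => f i n x) y - f i 0 x)‖
        ≤ max ‖f i 0 x‖ ‖rpsEval (fun n => f i n x) y - f i 0 x‖ :=
          IsUltrametricDist.norm_add_le_max _ _
      _ ≤ ‖g 0 x‖ := max_le (ha0 i x) (hft.trans hεg.le)
  · intro h
    rw [h, norm_zero] at hgeq
    exact hg0 x (norm_eq_zero.mp hgeq.symm)
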